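/- Let R be a semiprime ring, K and L Lie ideals of R, and m, n positive integers. If [K^m, L^n] = 0, then [K, L] = 0. -/
import Mathlib


/-- The additive subgroup generated by commutators `a*b - b*a` with `a ∈ A`, `b ∈ B`. -/
def commSG (R : Type*) [NonUnitalRing R] (A B : Set R) : AddSubgroup R :=
  AddSubgroup.closure {x | ∃ a ∈ A, ∃ b ∈ B, x = a * b - b * a}

/-- The additive subgroup generated by products `a*b` with `a ∈ A`, `b ∈ B`. -/
def prodSG (R : Type*) [NonUnitalRing R] (A B : Set R) : AddSubgroup R :=
  AddSubgroup.closure {x | ∃ a ∈ A, ∃ b ∈ B, x = a * b}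

/-- `L` is a Lie ideal of `R`. -/
def IsLieIdeal (R : Type*) [NonUnitalRing R] (L : AddSubgroup R) : Prop :=
  ∀ a ∈ L, ∀ r : R, a * r - r * a ∈ L

/-- `sgPow R L n` is the additive subgroup `L^(n+1)` generated by products of `n+1`
elements of `L`. -/
def sgPow (R : Type*) [NonUnitalRing R] (L : AddSubgroup R) : ℕ → AddSubgroup R
  | 0 => L
  | n + 1 => prodSG R (sgPow R L n) L

/-- `R` is a semiprime ring. -/
def IsSemiprimeRing (R : Type*) [NonUnitalRing R] : Prop :=
  ∀ a : R, (∀ x : R, a * x * a = 0) → a = 0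

/-- `R` is a prime ring. -/
def IsPrimeRing (R : Type*) [NonUnitalRing R] : Prop :=
  ∀ a b : R, (∀ x : R, a * x * b = 0) → a = 0 ∨ b = 0

lemma cert3 {R : Type*} [NonUnitalRing R] (k s u x : R)
    (h1 : (k*(s*u) - (s*u)*k) = 0) (h2 : (k*(s*(u*(k) - (k)*u)) - (s*(u*(k) - (k)*u))*k) = 0) (h3 : (k*(s*(u*(x*s) - (x*s)*u)) - (s*(u*(x*s) - (x*s)*u))*k) = 0) (h4 : (k*((s*(u) - (u)*s)*u) - ((s*(u) - (u)*s)*u)*k) = 0) (h5 : (k*((u*(x) - (x)*u)*s) - ((u*(x) - (x)*u)*s)*k) = 0) (h6 : (k*(u*s) - (u*s)*k) = 0) (h7 : (k*((u*(x*k) - (x*k)*u)*s) - ((u*(x*k) - (x*k)*u)*s)*k) = 0) (h8 : (k*(s*(u*(x*k) - (x*k)*u)) - (s*(u*(x*k) - (x*k)*u))*k) = 0) (h9 : (k*((u*(k*u) - (k*u)*u)*s) - ((u*(k*u) - (k*u)*u)*s)*k) = 0) (h10 : (k*(u*(s*(u) - (u)*s)) - (u*(s*(u) - (u)*s))*k)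 = 0) (h11 : (k*(s*(u*(x) - (x)*u)) - (s*(u*(x) - (x)*u))*k) = 0) :
    ((k*s - s*k)*u)*x*((k*s - s*k)*u) = 0 := by
  have key : ((k*s - s*k)*u)*x*((k*s - s*k)*u) =
      s*x*u*(k*(s*u) - (s*u)*k)*k + s*u*x*(k*(s*(u*(k) - (k)*u)) - (s*(u*(k) - (k)*u))*k) - s*u*x*(k*(s*u) - (s*u)*k)*k + (k*(s*(u*(x*s) - (x*s)*u)) - (s*(u*(x*s) - (x*s)*u))*k)*u*k + s*x*(k*(s*u) - (s*u)*k)*u*k + s*x*k*(k*((s*(u) - (u)*s)*u) - ((s*(u) - (u)*s)*u)*k) - s*x*(k*(s*u) - (s*u)*k)*k*u - s*x*k*(k*(s*u) - (s*u)*k)*u + s*(k*((u*(x) - (x)*u)*s) - ((u*(x) - (x)*u)*s)*k)*k*u + s*x*(k*(u*s) - (u*s)*k)*k*u - s*(k*((u*(x*k) - (x*k)*u)*s) - ((u*(x*k) - (x*k)*u)*s)*k)*u + (k*(s*(u*(x*k) - (x*k)*u)) - (s*(u*(x*k) - (x*k)*u))*k)*s*u - s*x*k*u*(k*(s*u) -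 (s*u)*k) - s*x*(k*((u*(k*u) - (k*u)*u)*s) - ((u*(k*u) - (k*u)*u)*s)*k) + s*x*k*u*(k*(u*s) - (u*s)*k) - s*x*(k*(u*(s*(u) - (u)*s)) - (u*(s*(u) - (u)*s))*k)*k - s*x*u*(k*(u*s) - (u*s)*k)*k + s*x*u*k*(k*(s*u) - (s*u)*k) - (k*(s*(u*(x) - (x)*u)) - (s*(u*(x) - (x)*u))*k)*k*s*u + s*x*k*(k*(u*(s*(u) - (u)*s)) - (u*(s*(u) - (u)*s))*k) - s*k*x*(k*(u*s) - (u*s)*k)*u - (k*(s*(u*(x*s) - (x*s)*u)) - (s*(u*(x*s) - (x*s)*u))*k)*k*u - k*s*x*(k*((s*(u) - (u)*s)*u) - ((s*(u) - (u)*s)*u)*k) - k*s*x*u*(k*(s*u) - (s*u)*k) + k*s*x*(k*(s*u) - (s*u)*k)*u + k*s*u*x*(k*(s*u) - (s*u)*k) := by noncomm_ring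
  rw [key, h1, h2, h3, h4, h5, h6, h7, h8, h9, h10, h11]
  simp

lemma cert7 {R : Type*} [NonUnitalRing R] (k b u x : R)
    (h1 : ((u*(x) - (x)*u)*(k*(b*u) - (b*u)*k)) = 0) (h2 : (u*(k*(b*u) - (b*u)*k)) = 0) (h3 : ((k*((u*(x) - (x)*u)*b) - ((u*(x) - (x)*u)*b)*k)*u) = 0) (h4 : ((k*(u*b) - (u*b)*k)*u) = 0) (h5 : (k*((u*(x) - (x)*u)*(b*u)) - ((u*(x) - (x)*u)*(b*u))*k) = 0) (h6 : (k*(u*(b*u)) - (u*(b*u))*k) = 0) :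
    ((k*b - b*k)*u)*x*((k*b - b*k)*u) = 0 := by
  have key : ((k*b - b*k)*u)*x*((k*b - b*k)*u) =
      k*b*((u*(x) - (x)*u)*(k*(b*u) - (b*u)*k)) + k*b*x*(u*(k*(b*u) - (b*u)*k)) + k*b*((k*((u*(x) - (x)*u)*b) - ((u*(x) - (x)*u)*b)*k)*u) + k*b*x*((k*(u*b) - (u*b)*k)*u) - k*b*(k*((u*(x) - (x)*u)*(b*u)) - ((u*(x) - (x)*u)*(b*u))*k) - k*b*x*(k*(u*(b*u)) - (u*(b*u))*k) - b*k*((u*(x) - (x)*u)*(k*(b*u) - (b*u)*k)) - b*k*x*(u*(k*(b*u) - (b*u)*k)) - b*k*((k*((u*(x) - (x)*u)*b) - ((u*(x) - (x)*u)*b)*k)*u) - b*k*x*((k*(u*b) - (u*b)*k)*u) + b*k*(k*((u*(x) - (x)*u)*(b*u)) - ((u*(x) - (x)*u)*(b*u))*k) + b*k*x*(k*(u*(b*u)) - (u*(b*u))*k) := by noncomm_ring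
  rw [key, h1, h2, h3, h4, h5, h6]
  simp

lemma cert8 {R : Type*} [NonUnitalRing R] (k b u x : R)
    (h1 : (k*((u*(k*x) - (k*x)*u)*(b*u)) - ((u*(k*x) - (k*x)*u)*(b*u))*k) = 0) (h2 : ((k*((u*(k*x) - (k*x)*u)*b) - ((u*(k*x) - (k*x)*u)*b)*k)*u) = 0) (h3 : ((k*((u*(x) - (x)*u)*b) - ((u*(x) - (x)*u)*b)*k)*u) = 0) (h4 : (k*((u*(x) - (x)*u)*(b*u)) - ((u*(x) - (x)*u)*(b*u))*k) = 0) :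
    (b*(k*u - u*k))*x*(b*(k*u - u*k)) = 0 := by
  have key : (b*(k*u - u*k))*x*(b*(k*u - u*k)) =
      -b*(k*((u*(k*x) - (k*x)*u)*(b*u)) - ((u*(k*x) - (k*x)*u)*(b*u))*k) + b*((k*((u*(k*x) - (k*x)*u)*b) - ((u*(k*x) - (k*x)*u)*b)*k)*u) - b*k*((k*((u*(x) - (x)*u)*b) - ((u*(x) - (x)*u)*b)*k)*u) + b*k*(k*((u*(x) - (x)*u)*(b*u)) - ((u*(x) - (x)*u)*(b*u))*k) := by noncomm_ring
  rw [key, h1, h2, h3, h4]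
  simp



section Plumbing

variable {R : Type*} [NonUnitalRing R]

lemma prodSG_mul_mem {A B : Set R} {a b : R} (ha : a ∈ A) (hb : b ∈ B) :
    a * b ∈ prodSG R A B :=
  AddSubgroup.subset_closure ⟨a, ha, b, hb, rfl⟩

lemma sgPow_zero (L : AddSubgroup R) : sgPow R L 0 = L := rfl

lemma sgPow_succ (L : AddSubgroup R) (n : ℕ) :
    sgPow R L (n + 1) = prodSG R (sgPow R L n) L := rfl

lemma sgPow_lieIdeal (L : AddSubgroup R) (hL : IsLieIdeal R L) :
    ∀ n, IsLieIdeal R (sgPow R L n) := by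
  intro n
  induction n with
  | zero => exact hL
  | succ n ih =>
    intro a ha r
    refine AddSubgroup.closure_induction ?_ ?_ ?_ ?_ ha
    · rintro z ⟨σ, hσ, μ, hμ, rfl⟩
      have key : σ * μ * r - r * (σ * μ) = σ * (μ * r - r * μ) + (σ * r - r * σ) * μ := by
        noncomm_ring
      rw [key]
      exact add_mem (prodSG_mul_mem hσ (hL μ hμ r)) (prodSG_mul_mem (ih σ hσ r) hμ)
    · simpa using (zero_mem (sgPow R L (n+1)))
    · intro a b _ _ pa pb
      have key : (a + b) * r - r * (a + b) = (a * r - r * a) + (b * r - r * b) := by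
        noncomm_ring
      rw [key]; exact add_mem pa pb
    · intro a _ pa
      have key : (-a) * r - r * (-a) = -(a * r - r * a) := by noncomm_ring
      rw [key]; exact neg_mem pa

lemma mul_sgPow_mem (L : AddSubgroup R) :
    ∀ j, ∀ y ∈ L, ∀ x ∈ sgPow R L j, y * x ∈ sgPow R L (j + 1) := by
  intro j
  induction j with
  | zero => intro y hy x hx; exact prodSG_mul_mem hy hx
  | succ j ih =>
    intro y hy x hx
    refine AddSubgroup.closure_induction ?_ ?_ ?_ ?_ hx
    · rintro z ⟨σ, hσ, μ, hμ, rfl⟩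
      rw [← mul_assoc]
      exact prodSG_mul_mem (ih y hy σ hσ) hμ
    · simpa using (zero_mem (sgPow R L (j+2)))
    · intro a b _ _ pa pb
      rw [mul_add]; exact add_mem pa pb
    · intro a _ pa
      rw [mul_neg]; exact neg_mem pa

end Plumbing

section Core

variable {R : Type*} [NonUnitalRing R]

/-- If `κ` commutes with all products of two elements of a Lie ideal `L` of a
semiprime ring, then `κ` commutes with `L`. -/
lemma core (hR : IsSemiprimeRing R) (L : AddSubgroup R) (hL : IsLieIdeal R L) (κ : R)
    (hyp : ∀ lam ∈ L, ∀ mu ∈ L, κ * (lam * mu) - (lam * mu) * κ = 0) :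
    ∀ lam ∈ L, κ * lam - lam * κ = 0 := by
  have A1 : ∀ σ ∈ L, ∀ μ ∈ L, (κ * σ - σ * κ) * μ = 0 := by
    intro σ hσ μ hμ
    refine hR _ (fun x => ?_)
    exact cert3 κ σ μ x
      (hyp σ hσ μ hμ)
      (hyp σ hσ _ (hL μ hμ κ))
      (hyp σ hσ _ (hL μ hμ (x*σ)))
      (hyp _ (hL σ hσ μ) μ hμ)
      (hyp _ (hL μ hμ x) σ hσ)
      (hyp μ hμ σ hσ)
      (hyp _ (hL μ hμ (x*κ)) σ hσ)
      (hyp σ hσ _ (hL μ hμ (x*κ)))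
      (hyp _ (hL μ hμ (κ*μ)) σ hσ)
      (hyp μ hμ _ (hL σ hσ μ))
      (hyp σ hσ _ (hL μ hμ x))
  have A3 : ∀ μ ∈ L, ∀ σ ∈ L, μ * (κ * σ - σ * κ) = 0 := by
    intro μ hμ σ hσ
    have key : μ * (κ * σ - σ * κ)
        = (κ * (μ * σ) - (μ * σ) * κ) - (κ * μ - μ * κ) * σ := by noncomm_ring
    rw [key, hyp μ hμ σ hσ, A1 μ hμ σ hσ]; simp
  have S3 : ∀ lam ∈ L, ∀ y : R, (κ * lam - lam * κ) * y * lam = 0 := by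
    intro lam hlam y
    refine hR _ (fun m => ?_)
    have key : (κ * lam - lam * κ) * y * lam * m * ((κ * lam - lam * κ) * y * lam)
        = (κ * lam - lam * κ) * y * (m * (lam * (κ * lam - lam * κ))) * y * lam
          + (κ * lam - lam * κ) * y * ((lam * m - m * lam) * (κ * lam - lam * κ)) * y * lam := by
      noncomm_ring
    rw [key, A3 lam hlam lam hlam, A3 _ (hL lam hlam m) lam hlam]
    simp
  intro lam hlam
  refine hR _ (fun x => ?_)
  have key : (κ * lam - lam * κ) * x * (κ * lam - lam * κ)
      = (κ * lam - lam * κ) * (x * κ) * lam - ((κ * lam - lam * κ) * x * lam) * κ := by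
    noncomm_ring
  rw [key, S3 lam hlam (x * κ), S3 lam hlam x]
  simp

/-- The inductive step: if `κ` commutes with `M·L` and `L·M` then `κ` commutes with
`b·L` for any `b` with `b·L ∪ L·b ⊆ M`. -/
lemma lemX (hR : IsSemiprimeRing R) (L M : AddSubgroup R) (hL : IsLieIdeal R L)
    (hM : IsLieIdeal R M) (κ bb : R)
    (hbL : ∀ v ∈ L, bb * v ∈ M ∧ v * bb ∈ M)
    (hyp : ∀ σ ∈ M, ∀ μ ∈ L, (κ * (σ * μ) - (σ * μ) * κ = 0)
      ∧ (κ * (μ * σ) - (μ * σ) * κ = 0)) :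
    ∀ u ∈ L, κ * (bb * u) - (bb * u) * κ = 0 := by
  have A1 : ∀ σ ∈ M, ∀ μ ∈ L, (κ * σ - σ * κ) * μ = 0 := by
    intro σ hσ μ hμ
    refine hR _ (fun x => ?_)
    exact cert3 κ σ μ x
      (hyp σ hσ μ hμ).1
      (hyp σ hσ _ (hL μ hμ κ)).1
      (hyp σ hσ _ (hL μ hμ (x*σ))).1
      (hyp _ (hM σ hσ μ) μ hμ).1
      (hyp σ hσ _ (hL μ hμ x)).2
      (hyp σ hσ μ hμ).2
      (hyp σ hσ _ (hL μ hμ (x*κ))).2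
      (hyp σ hσ _ (hL μ hμ (x*κ))).1
      (hyp σ hσ _ (hL μ hμ (κ*μ))).2
      (hyp _ (hM σ hσ μ) μ hμ).2
      (hyp σ hσ _ (hL μ hμ x)).1
  have A3 : ∀ μ ∈ L, ∀ σ ∈ M, μ * (κ * σ - σ * κ) = 0 := by
    intro μ hμ σ hσ
    have A2 : (κ * μ - μ * κ) * σ = 0 := by
      refine hR _ (fun x => ?_)
      exact cert3 κ μ σ x
        (hyp σ hσ μ hμ).2
        (hyp _ (hM σ hσ κ) μ hμ).2
        (hyp _ (hM σ hσ (x*μ)) μ hμ).2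
        (hyp σ hσ _ (hL μ hμ σ)).2
        (hyp _ (hM σ hσ x) μ hμ).1
        (hyp σ hσ μ hμ).1
        (hyp _ (hM σ hσ (x*κ)) μ hμ).1
        (hyp _ (hM σ hσ (x*κ)) μ hμ).2
        (hyp _ (hM σ hσ (κ*σ)) μ hμ).1
        (hyp σ hσ _ (hL μ hμ σ)).1
        (hyp _ (hM σ hσ x) μ hμ).2
    have key : μ * (κ * σ - σ * κ)
        = (κ * (μ * σ) - (μ * σ) * κ) - (κ * μ - μ * κ) * σ := by noncomm_ring
    rw [key, (hyp σ hσ μ hμ).2, A2]; simp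
  intro u hu
  have B1 : (κ * bb - bb * κ) * u = 0 := by
    refine hR _ (fun x => ?_)
    exact cert7 κ bb u x
      (A3 _ (hL u hu x) _ (hbL u hu).1)
      (A3 u hu _ (hbL u hu).1)
      (A1 _ (hbL _ (hL u hu x)).2 u hu)
      (A1 _ (hbL u hu).2 u hu)
      (hyp _ (hbL u hu).1 _ (hL u hu x)).2
      (hyp _ (hbL u hu).1 u hu).2
  have B2 : bb * (κ * u - u * κ) = 0 := by
    refine hR _ (fun x => ?_)
    exact cert8 κ bb u x
      (hyp _ (hbL u hu).1 _ (hL u hu (κ*x))).2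
      (A1 _ (hbL _ (hL u hu (κ*x))).2 u hu)
      (A1 _ (hbL _ (hL u hu x)).2 u hu)
      (hyp _ (hbL u hu).1 _ (hL u hu x)).2
  have key : κ * (bb * u) - (bb * u) * κ
      = (κ * bb - bb * κ) * u + bb * (κ * u - u * κ) := by noncomm_ring
  rw [key, B1, B2]; simp

/-- Descent: commuting with `L^(j+1)` implies commuting with `L`. -/
lemma descend (hR : IsSemiprimeRing R) (L : AddSubgroup R) (hL : IsLieIdeal R L) (κ : R) :
    ∀ j, (∀ y ∈ sgPow R L j, κ * y - y * κ = 0) → ∀ y ∈ L, κ * y - y * κ = 0 := by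
  intro j
  induction j with
  | zero => exact fun H => H
  | succ j ih =>
    intro H
    refine ih ?_
    cases j with
    | zero =>
      exact fun y hy => core hR L hL κ
        (fun a ha c hc => H _ (prodSG_mul_mem ha hc)) y hy
    | succ i =>
      intro y hy
      refine AddSubgroup.closure_induction ?_ ?_ ?_ ?_ hy
      · rintro z ⟨bb, hb, uu, hu, rfl⟩
        refine lemX hR L (sgPow R L (i + 1)) hL (sgPow_lieIdeal L hL (i + 1)) κ bb
          (fun v hv => ⟨prodSG_mul_mem hb hv, mul_sgPow_mem L i v hv bb hb⟩)
          (fun σ hσ μ hμ => ⟨H _ (prodSG_mul_mem hσ hμ),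
            H _ (mul_sgPow_mem L (i + 1) μ hμ σ hσ)⟩)
          uu hu
      · simp
      · intro a b _ _ pa pb
        have key : κ * (a + b) - (a + b) * κ = (κ * a - a * κ) + (κ * b - b * κ) := by
          noncomm_ring
        rw [key, pa, pb]; simp
      · intro a _ pa
        have key : κ * (-a) - (-a) * κ = -(κ * a - a * κ) := by noncomm_ring
        rw [key, pa]; simp

end Core

/-- in a semiprime ring, [K^m, L^n] = 0 implies [K, L] = 0. -/
theorem stmt9 (R : Type*) [NonUnitalRing R] (hR : IsSemiprimeRing R)
    (K L : AddSubgroup R) (hK : IsLieIdeal R K) (hL : IsLieIdeal R L)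
    (m n : ℕ) (hm : 1 ≤ m) (hn : 1 ≤ n)
    (h : ∀ x ∈ sgPow R K (m - 1), ∀ y ∈ sgPow R L (n - 1), x * y = y * x) :
    ∀ x ∈ K, ∀ y ∈ L, x * y = y * x := by
  have h1 : ∀ x ∈ sgPow R K (m - 1), ∀ y ∈ L, x * y - y * x = 0 := by
    intro x hx
    exact descend hR L hL x (n - 1)
      (fun y hy => by rw [h x hx y hy]; exact sub_self _)
  have h2 : ∀ y ∈ L, ∀ x ∈ K, y * x - x * y = 0 := by
    intro y hy
    refine descend hR K hK y (m - 1) (fun x hx => ?_)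
    have e : y * x - x * y = -(x * y - y * x) := by noncomm_ring
    rw [e, h1 x hx y hy]; simp
  intro x hx y hy
  exact (sub_eq_zero.mp (h2 y hy x hx)).symm
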